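/- arXiv:0910.1899 — 3 statements merged into one kernel-verified Lean document; each statement's English description precedes it below -/
import Mathlib

section
/- Let n ≥ 2 and let F = FreeGroup (Fin n). Suppose u, v ∈ F and there exist a natural number m with 1 ≤ m ≤ n, a map b : Fin m → F with FreeGroup.lift b : FreeGroup (Fin m) →* F injective, an element w : FreeGroup (Fin m) with (FreeGroup.lift b) w = v, and a group automorphism h : FreeGroup (Fin n) ≃* FreeGroup (Fin n) with h u = ι_m w. Then there exists an injective group homomorphism f : F →* F with f u = v. -/
namespace CiobanuPP
open FreeGroup List
set_option linter.unusedSectionVars false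
variable {α : Type*} [DecidableEq α]




/-- Non-cancelling adjacency predicate for letters of a free group word. -/
def NC (a b : α × Bool) : Prop := ¬(a.1 = b.1 ∧ a.2 = !b.2)

lemma nc_iff {a b : α × Bool} : NC a b ↔ b ≠ (a.1, !a.2) := by
  unfold NC
  constructor
  · rintro h rfl
    exact h ⟨rfl, by simp⟩
  · rintro h ⟨h1, h2⟩
    apply h
    ext
    · exact h1.symm
    · simp [h2]

lemma reduce_eq_self_of_chain' {L : List (α × Bool)} (h : List.Chain' NC L) :
    reduce L = L := by
  induction L with
  | nil => simp
  | cons a L ih =>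
    have hL : reduce L = L := ih h.tail
    rw [reduce.cons, hL]
    cases L with
    | nil => rfl
    | cons b L' =>
      have hnc : NC a b := (List.isChain_cons.mp h).1 b rfl
      simp only [NC] at hnc
      exact if_neg hnc

lemma chain'_of_reduce_eq_self {L : List (α × Bool)} (h : reduce L = L) :
    List.Chain' NC L := by
  induction L with
  | nil => simp [List.Chain']
  | cons a L ih =>
    rw [reduce.cons] at h
    rcases hL : reduce L with _ | ⟨b, L'⟩
    · rw [hL] at h
      have : L = [] := by
        cases L with
        | nil => rfl
        | cons c M =>
          exfalso
          have hlen := congrArg List.length h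
          have hle := FreeGroup.Red.length_le (FreeGroup.reduce.red (L := c :: M))
          rw [hL] at hle
          simp at hlen hle
      subst this; simp [List.Chain']
    · rw [hL] at h
      simp only [List.casesOn] at h
      by_cases hc : a.1 = b.1 ∧ a.2 = !b.2
      · exfalso
        rw [if_pos hc] at h
        have hlen := congrArg List.length h
        have hle := FreeGroup.Red.length_le (FreeGroup.reduce.red (L := L))
        rw [hL] at hle
        simp at hlen hle
        omega
      · rw [if_neg hc] at h
        have h2 := (List.cons.injEq _ _ _ _).mp h
        have hLL : L = b :: L' := h2.2.symm
        have hred : reduce L = L := by rw [← hLL] at hL; exact hL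
        have hch := ih hred
        rw [hLL]
        refine List.isChain_cons.mpr ⟨fun y hy => ?_, by rw [← hLL]; exact hch⟩
        simp only [head?_cons, Option.mem_def, Option.some.injEq] at hy
        subst hy
        exact hc

lemma chain'_toWord (x : FreeGroup α) : List.Chain' NC (toWord x) :=
  chain'_of_reduce_eq_self (reduce_toWord x)

lemma toWord_mk_eq {L : List (α × Bool)} (h : List.Chain' NC L) : toWord (mk L) = L := by
  rw [toWord_mk, reduce_eq_self_of_chain' h]

lemma chain'_replicate_nc (M : ℕ) (a : α × Bool) : List.Chain' NC (replicate M a) := by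
  induction M with
  | zero => simp [List.Chain']
  | succ k ih =>
    rw [List.replicate_succ]
    refine List.isChain_cons.mpr ⟨?_, ih⟩
    intro y hy
    cases k with
    | zero => simp at hy
    | succ k' =>
      rw [List.replicate_succ] at hy
      simp only [head?_cons, Option.mem_def, Option.some.injEq] at hy
      subst hy
      simp [NC]






/-- number of leading occurrences of `c`. -/
def leadCount (c : α × Bool) : List (α × Bool) → ℕ
  | [] => 0
  | a :: L => if a = c then leadCount c L + 1 else 0

lemma leadCount_le_length (c : α × Bool) (L : List (α × Bool)) : leadCount c L ≤ L.length := by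
  induction L with
  | nil => simp [leadCount]
  | cons a L ih =>
    by_cases h : a = c <;> simp [leadCount, h] <;> omega

lemma take_leadCount (c : α × Bool) (L : List (α × Bool)) :
    L.take (leadCount c L) = replicate (leadCount c L) c := by
  induction L with
  | nil => simp [leadCount]
  | cons a L ih =>
    by_cases h : a = c
    · subst h
      simp [leadCount, List.replicate_succ, ih]
    · simp [leadCount, h]

lemma decomp_leadCount (c : α × Bool) (L : List (α × Bool)) :
    L = replicate (leadCount c L) c ++ L.drop (leadCount c L) := by
  conv_lhs => rw [← List.take_append_drop (leadCount c L) L]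
  rw [take_leadCount]

lemma head?_drop_leadCount (c : α × Bool) (L : List (α × Bool)) :
    ∀ a, (L.drop (leadCount c L)).head? = some a → a ≠ c := by
  induction L with
  | nil => simp [leadCount]
  | cons a L ih =>
    by_cases h : a = c
    · subst h
      simpa [leadCount] using ih
    · intro x hx
      simp [leadCount, h] at hx
      subst hx; exact h

lemma leadCount_replicate_append (c : α × Bool) (M : ℕ) (R : List (α × Bool))
    (hR : ∀ a, R.head? = some a → a ≠ c) :
    leadCount c (replicate M c ++ R) = M := by
  induction M with
  | zero =>
    simp only [replicate_zero, nil_append]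
    cases R with
    | nil => simp [leadCount]
    | cons a R' =>
      have := hR a (by simp)
      simp [leadCount, this]
  | succ k ih =>
    rw [List.replicate_succ, cons_append]
    simp [leadCount, ih]

lemma leadCount_append_left (c : α × Bool) {A : List (α × Bool)} (Z : List (α × Bool))
    (hA : ∃ x ∈ A, x ≠ c) : leadCount c (A ++ Z) = leadCount c A := by
  induction A with
  | nil => simp at hA
  | cons a A ih =>
    by_cases h : a = c
    · subst h
      have hA' : ∃ x ∈ A, x ≠ a := by
        rcases hA with ⟨x, hx, hxc⟩
        rcases List.mem_cons.mp hx with h' | h'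
        · exact absurd h' hxc
        · exact ⟨x, h', hxc⟩
      simp [leadCount, ih hA']
    · simp [leadCount, h]

section Weights

variable (wt : α × Bool → ℤ)

/-- total weight of a word -/
def wsum (L : List (α × Bool)) : ℤ := (L.map wt).sum

/-- prefix weight sum -/
def psum (L : List (α × Bool)) (t : ℕ) : ℤ := ((L.take t).map wt).sum

lemma wsum_append (L₁ L₂ : List (α × Bool)) : wsum wt (L₁ ++ L₂) = wsum wt L₁ + wsum wt L₂ := by
  simp [wsum]

lemma wsum_replicate (M : ℕ) (a : α × Bool) : wsum wt (replicate M a) = M * wt a := by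
  simp [wsum, mul_comm]

lemma psum_append_le (L₁ L₂ : List (α × Bool)) {t : ℕ} (h : t ≤ L₁.length) :
    psum wt (L₁ ++ L₂) t = psum wt L₁ t := by
  simp [psum, List.take_append_of_le_length h]

lemma psum_append_ge (L₁ L₂ : List (α × Bool)) (s : ℕ) :
    psum wt (L₁ ++ L₂) (L₁.length + s) = wsum wt L₁ + psum wt L₂ s := by
  simp [psum, wsum, List.take_append]
  rw [List.take_of_length_le (by simp)]

lemma psum_length (L : List (α × Bool)) : psum wt L L.length = wsum wt L := by
  simp [psum, wsum]

lemma psum_replicate (M : ℕ) (a : α × Bool) (t : ℕ) (h : t ≤ M) :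
    psum wt (replicate M a) t = t * wt a := by
  rw [psum, List.take_replicate]
  simp [min_eq_left h, mul_comm]

variable (hwt : ∀ a (b : Bool), wt (a, !b) = - wt (a, b))

include hwt

lemma wsum_step {L₁ L₂ : List (α × Bool)} (h : Red.Step L₁ L₂) : wsum wt L₂ = wsum wt L₁ := by
  cases h with
  | @not L₁ L₂ x b =>
    simp [wsum_append, wsum, hwt]

lemma wsum_red {L₁ L₂ : List (α × Bool)} (h : Red L₁ L₂) : wsum wt L₂ = wsum wt L₁ := by
  induction h with
  | refl => rfl
  | tail _ hstep ih => rw [wsum_step wt hwt hstep, ih]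

lemma psum_step {L₁ L₂ : List (α × Bool)} (h : Red.Step L₁ L₂) :
    ∀ t, ∃ t', psum wt L₂ t = psum wt L₁ t' := by
  cases h with
  | @not A B x b =>
    intro t
    rcases le_or_gt t A.length with ht | ht
    · exact ⟨t, by rw [psum_append_le _ _ _ ht, psum_append_le _ _ _ ht]⟩
    · refine ⟨t + 2, ?_⟩
      obtain ⟨s, rfl⟩ : ∃ s, t = A.length + s := ⟨t - A.length, by omega⟩
      rw [psum_append_ge]
      have : A.length + s + 2 = A.length + (s + 2) := by omega
      rw [this, psum_append_ge]
      congr 1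
      show psum wt B s = psum wt ((x, b) :: (x, !b) :: B) (s + 2)
      simp [psum, hwt]

lemma psum_red {L₁ L₂ : List (α × Bool)} (h : Red L₁ L₂) :
    ∀ t, ∃ t', psum wt L₂ t = psum wt L₁ t' := by
  induction h with
  | refl => exact fun t => ⟨t, rfl⟩
  | tail _ hstep ih =>
    intro t
    obtain ⟨t', ht'⟩ := psum_step wt hwt hstep t
    obtain ⟨t'', ht''⟩ := ih t'
    exact ⟨t'', ht'.trans ht''⟩

lemma wsum_invRev (L : List (α × Bool)) : wsum wt (invRev L) = - wsum wt L := by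
  unfold FreeGroup.invRev
  induction L with
  | nil => simp [wsum]
  | cons a L ih =>
    rcases a with ⟨x, b⟩
    simp only [List.map_cons, List.reverse_cons, wsum, List.map_append, List.sum_append] at *
    simp only [List.map_cons, List.sum_cons, List.map_nil, List.sum_nil] at *
    rw [ih]
    have := hwt x b
    simp at this ⊢
    omega

lemma psum_invRev (L : List (α × Bool)) (t : ℕ) (ht : t ≤ L.length) :
    psum wt (invRev L) t = psum wt L (L.length - t) - wsum wt L := by
  unfold FreeGroup.invRev
  have hlen : (L.map fun x => (x.1, !x.2)).length = L.length := by simp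
  rw [psum, List.take_reverse]
  · rw [hlen]
    have : ((L.map fun x => (x.1, !x.2)).drop (L.length - t)) = (L.drop (L.length - t)).map fun x => (x.1, !x.2) := by
      simp [List.map_drop]
    rw [this]
    have hsum : ∀ M : List (α × Bool), (((M.map fun x => (x.1, !x.2))).map wt).sum = - (M.map wt).sum := by
      intro M
      induction M with
      | nil => simp
      | cons a M ih =>
        rcases a with ⟨x, b⟩
        simp only [List.map_cons, List.sum_cons, ih, hwt]
        ring
    rw [List.map_reverse, List.sum_reverse, hsum]
    have hd : ((L.drop (L.length - t)).map wt).sum = wsum wt L - psum wt L (L.length - t) := by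
      have := List.take_append_drop (L.length - t) L
      have h2 : wsum wt L = psum wt L (L.length - t) + ((L.drop (L.length - t)).map wt).sum := by
        conv_lhs => rw [wsum, ← this]
        simp [psum, List.map_append]
      omega
    rw [hd]
    ring

end Weights

lemma mk_replicate_pos (a : α) (p : ℕ) : mk (replicate p (a, true)) = of a ^ p := by
  rw [← FreeGroup.toWord_of_pow a p, FreeGroup.mk_toWord]

lemma invRev_replicate (a : α) (b : Bool) (p : ℕ) :
    invRev (replicate p (a, b)) = replicate p (a, !b) := by
  unfold FreeGroup.invRev
  simp [List.map_replicate]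

lemma mk_replicate_neg (a : α) (p : ℕ) : mk (replicate p (a, false)) = (of a ^ p)⁻¹ := by
  rw [← mk_replicate_pos, FreeGroup.inv_mk, invRev_replicate]
  norm_num


lemma nc_ne_fst {a b : α × Bool} (h : a.1 ≠ b.1) : NC a b := fun hc => h hc.1

lemma nc_right {x : α} {b : Bool} {y : α × Bool} (h : y ≠ (x, !b)) : NC (x, b) y := by
  rintro ⟨h1, h2⟩
  exact h (by cases y; simp_all)

lemma nc_left {x : α} {b : Bool} {y : α × Bool} (h : y ≠ (x, !b)) : NC y (x, b) := by
  rintro ⟨h1, h2⟩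
  apply h
  cases y
  simp_all

lemma head?_replicate_pos (a : α × Bool) {M : ℕ} (h : 1 ≤ M) :
    (replicate M a).head? = some a := by
  obtain ⟨k, rfl⟩ : ∃ k, M = k + 1 := ⟨M - 1, by omega⟩
  simp [List.replicate_succ]

lemma getLast?_replicate_pos (a : α × Bool) {M : ℕ} (h : 1 ≤ M) :
    (replicate M a).getLast? = some a := by
  rw [← List.head?_reverse, List.reverse_replicate]
  exact head?_replicate_pos a h

/-- the number of leading positive occurrences of the letter `i₀` -/
def runCt (i₀ : α) (g : FreeGroup α) : ℕ := leadCount (i₀, true) (toWord g)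

lemma runCt_pow (i₀ : α) (M : ℕ) : runCt i₀ (of i₀ ^ M) = M := by
  unfold runCt
  rw [FreeGroup.toWord_of_pow]
  have := leadCount_replicate_append (α := α) (i₀, true) M []
  simpa using this (by simp)

lemma runCt_one (i₀ : α) : runCt i₀ (1 : FreeGroup α) = 0 := by
  unfold runCt
  simp [FreeGroup.toWord_one, leadCount]

section Main

variable (i₀ i₁ : α) (hne : i₁ ≠ i₀) (wt : α × Bool → ℤ)
  (hwt : ∀ a (b : Bool), wt (a, !b) = - wt (a, b)) (J : ℕ)
  (hw : 1 ≤ wt (i₀, true))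

/-- decomposition of `g` according to its leading run. -/
lemma decomp_g (g : FreeGroup α) :
    g = of i₀ ^ (runCt i₀ g) * mk ((toWord g).drop (runCt i₀ g)) := by
  conv_lhs => rw [← FreeGroup.mk_toWord (x := g)]
  conv_lhs => rw [decomp_leadCount (i₀, true) (toWord g)]
  rw [← FreeGroup.mul_mk, mk_replicate_pos]
  rfl

include hwt hw in
/-- Main junction lemma for elements `h` with profile bounded by `J`. -/
lemma run_H_mul {h : FreeGroup α} (g : FreeGroup α) (hh1 : h ≠ 1)
    (htot : wsum wt (toWord h) = 0)
    (hprof : ∀ t, (psum wt (toWord h) t).natAbs ≤ J)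
    (hrg : J + 1 ≤ runCt i₀ g) : runCt i₀ (h * g) ≤ J := by
  classical
  set st : α × Bool := (i₀, true) with hst
  set sf : α × Bool := (i₀, false) with hsf
  set p := runCt i₀ g with hp
  set Lg := toWord g with hLg
  set R := Lg.drop p with hR
  have hgdec : Lg = replicate p st ++ R := decomp_leadCount st Lg
  have hRhead : ∀ a, R.head? = some a → a ≠ st := head?_drop_leadCount st Lg
  have hchaing : List.Chain' NC Lg := chain'_toWord g
  -- decompose h by its trailing (i₀, false) run
  set Lh := toWord h with hLh
  set q := leadCount sf Lh.reverse with hq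
  set B := Lh.reverse.drop q with hB
  have hrev : Lh.reverse = replicate q sf ++ B := decomp_leadCount sf Lh.reverse
  set A := B.reverse with hA
  have hhdec : Lh = A ++ replicate q sf := by
    conv_lhs => rw [← List.reverse_reverse Lh, hrev]
    rw [List.reverse_append, List.reverse_replicate]
  have hchainh : List.Chain' NC Lh := chain'_toWord h
  have hBhead : ∀ a, B.head? = some a → a ≠ sf := head?_drop_leadCount sf Lh.reverse
  have hAlast : ∀ a, A.getLast? = some a → a ≠ sf := by
    intro a ha
    apply hBhead
    rw [← List.head?_reverse, List.reverse_reverse] at ha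
    exact ha
  -- w
  set w := wt st with hwdef
  have hwsf : wt sf = - w := by
    have := hwt i₀ true
    simpa using this
  -- wsum A = q * w
  have hwsA : wsum wt A = q * w := by
    have := wsum_append wt A (replicate q sf)
    rw [← hhdec] at this
    rw [htot] at this
    rw [wsum_replicate, hwsf] at this
    have : 0 = wsum wt A + (q : ℤ) * (-w) := this
    linarith
  -- q ≤ J
  have hqJ : q ≤ J := by
    have h1 : psum wt Lh A.length = wsum wt A := by
      conv_lhs => rw [hhdec]
      rw [psum_append_le wt _ _ (le_refl _)]
      exact psum_length wt A
    have h2 := hprof A.length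
    rw [h1, hwsA] at h2
    have h3 : (q : ℤ) ≤ (q : ℤ) * w := le_mul_of_one_le_right (by positivity) hw
    have h5 : (q : ℤ) * w ≤ (J : ℤ) := by
      calc (q : ℤ) * w ≤ (((q : ℤ) * w).natAbs : ℤ) := Int.le_natAbs
        _ ≤ (J : ℤ) := by exact_mod_cast h2
    have : (q : ℤ) ≤ (J : ℤ) := h3.trans h5
    exact_mod_cast this
  -- A contains a letter different from st
  have hAex : ∃ x ∈ A, x ≠ st := by
    by_contra hcon
    push_neg at hcon
    have hArep : A = replicate A.length st := List.eq_replicate_of_mem hcon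
    -- then Lh = replicate a st ++ replicate q sf with a*w - q*w = 0
    have hws : wsum wt Lh = (A.length : ℤ) * w - (q : ℤ) * w := by
      rw [hhdec, wsum_append, wsum_replicate, hwsf]
      conv_lhs => rw [hArep, wsum_replicate]
      ring
    rw [htot] at hws
    have haq : (A.length : ℤ) = (q : ℤ) := by
      have hwpos : (0:ℤ) < w := by linarith
      have : ((A.length : ℤ) - q) * w = 0 := by linarith
      rcases mul_eq_zero.mp this with h' | h'
      · linarith
      · exfalso; linarith
    have haq' : A.length = q := by exact_mod_cast haq
    -- q must be 0, else adjacent st sf in the reduced word Lh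
    rcases Nat.eq_zero_or_pos q with hq0 | hqpos
    · have : Lh = [] := by
        rw [hhdec, hArep, haq', hq0]
        simp
      exact hh1 (by rwa [← FreeGroup.toWord_eq_nil_iff])
    · -- junction st sf violates chain'
      have hch := hchainh
      rw [hhdec, hArep, haq'] at hch
      have hj := (List.isChain_append.mp hch).2.2
      have hlast : (replicate q st).getLast? = some st := getLast?_replicate_pos st hqpos
      have hhead : (replicate q sf).head? = some sf := head?_replicate_pos sf hqpos
      have := hj st (by rw [hlast]; rfl) sf (by rw [hhead]; rfl)
      exact this ⟨rfl, rfl⟩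
  -- assemble h * g
  have hpq : q + (p - q) = p := by omega
  set d := p - q with hd
  have hd1 : 1 ≤ d := by omega
  have hgd : g = of i₀ ^ p * mk R := decomp_g i₀ g
  have hhd : h = mk A * (of i₀ ^ q)⁻¹ := by
    conv_lhs => rw [← FreeGroup.mk_toWord (x := h)]
    have : mk Lh = mk (A ++ replicate q sf) := by rw [← hhdec]
    rw [this, ← FreeGroup.mul_mk, mk_replicate_neg]
  have hprod : h * g = mk (A ++ (replicate d st ++ R)) := by
    rw [hhd, hgd]
    have hsplit : of i₀ ^ p = of i₀ ^ q * of i₀ ^ d := by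
      rw [← pow_add, hpq]
    rw [hsplit]
    have : mk A * (of i₀ ^ q)⁻¹ * (of i₀ ^ q * of i₀ ^ d * mk R)
        = mk A * (of i₀ ^ d * mk R) := by
      group
    rw [this, ← mk_replicate_pos, FreeGroup.mul_mk, FreeGroup.mul_mk]
  -- the word is reduced
  have hjR : ∀ y ∈ R.head?, NC st y := by
    have hch := hchaing
    rw [hgdec] at hch
    have hj := (List.isChain_append.mp hch).2.2
    intro y hy
    apply hj st _ y hy
    exact getLast?_replicate_pos st (by omega)
  have hchW : List.Chain' NC (A ++ (replicate d st ++ R)) := by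
    refine List.isChain_append.mpr ?_
    refine ⟨?_, ?_, ?_⟩
    · -- chain' A
      have hch := hchainh
      rw [hhdec] at hch
      exact (List.isChain_append.mp hch).1
    · rw [List.isChain_append]
      refine ⟨chain'_replicate_nc d st, ?_, ?_⟩
      · have hch := hchaing
        rw [hgdec] at hch
        exact (List.isChain_append.mp hch).2.1
      · intro x hx y hy
        have hxs : x = st := by
          rw [getLast?_replicate_pos st hd1] at hx
          simpa using hx.symm
        subst hxs
        exact hjR y hy
    · intro x hx y hy
      have hys : y = st := by
        rw [List.head?_append] at hy
        rw [head?_replicate_pos st hd1] at hy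
        simpa using hy.symm
      subst hys
      apply nc_left
      have := hAlast x hx
      simpa using this
  have hword : toWord (h * g) = A ++ (replicate d st ++ R) := by
    rw [hprod]
    exact toWord_mk_eq hchW
  -- compute the run
  have hrunW : runCt i₀ (h * g) = leadCount st A := by
    unfold runCt
    rw [hword]
    exact leadCount_append_left st _ hAex
  -- bound it
  set r := leadCount st A with hr
  have hrA : r ≤ A.length := leadCount_le_length st A
  have h1 : psum wt Lh r = (r : ℤ) * w := by
    unfold psum
    conv_lhs => rw [hhdec, List.take_append_of_le_length hrA, take_leadCount]
    simp [mul_comm, hwdef, hr]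
  have h2 := hprof r
  rw [h1] at h2
  have h3 : (r : ℤ) ≤ (r : ℤ) * w := le_mul_of_one_le_right (by positivity) hw
  have h5 : (r : ℤ) * w ≤ (J : ℤ) := by
    calc (r : ℤ) * w ≤ (((r : ℤ) * w).natAbs : ℤ) := Int.le_natAbs
      _ ≤ (J : ℤ) := by exact_mod_cast h2
  have : (r : ℤ) ≤ (J : ℤ) := h3.trans h5
  rw [hrunW]
  exact_mod_cast this

include hne in
/-- Junction lemma for powers of the conjugated letter `c = s^M x s^{-M}`. -/
lemma run_c_mul (Ml : ℕ) (hMl : 1 ≤ Ml) (e : ℤ) (he : e ≠ 0) (g : FreeGroup α)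
    (hg : runCt i₀ g ≠ Ml) :
    runCt i₀ ((of i₀ ^ Ml * of i₁ * (of i₀ ^ Ml)⁻¹) ^ e * g) = Ml := by
  classical
  set st : α × Bool := (i₀, true) with hst
  set sf : α × Bool := (i₀, false) with hsf
  set p := runCt i₀ g with hp
  set Lg := toWord g with hLg
  set R := Lg.drop p with hR
  have hgdec : Lg = replicate p st ++ R := decomp_leadCount st Lg
  have hRhead : ∀ a, R.head? = some a → a ≠ st := head?_drop_leadCount st Lg
  have hchaing : List.Chain' NC Lg := chain'_toWord g
  have hgd : g = of i₀ ^ p * mk R := decomp_g i₀ g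
  have hconj : (of i₀ ^ Ml * of i₁ * (of i₀ ^ Ml)⁻¹ : FreeGroup α) ^ e
      = of i₀ ^ Ml * of i₁ ^ e * (of i₀ ^ Ml)⁻¹ := conj_zpow
  -- the exponent word
  set bb : Bool := decide (0 < e) with hbb
  set qe : ℕ := e.natAbs with hqe
  have hqe1 : 1 ≤ qe := by
    have := Int.natAbs_pos.mpr he
    omega
  have hxw : (of i₁ : FreeGroup α) ^ e = mk (replicate qe (i₁, bb)) := by
    rcases lt_trichotomy e 0 with hlt | heq | hgt
    · have hbbf : bb = false := by simp [hbb]; omega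
      have h2 : e = -(qe : ℤ) := by rw [hqe]; omega
      rw [h2, hbbf, mk_replicate_neg]
      simp
    · exact absurd heq he
    · have hbbt : bb = true := by simp [hbb]; omega
      have h2 : e = (qe : ℤ) := by rw [hqe]; omega
      rw [h2, hbbt, mk_replicate_pos]
      simp
  have hxw_head : ((replicate qe (i₁, bb)) ++ (replicate (0:ℕ) st)).head? = some (i₁, bb) := by
    simp [head?_replicate_pos _ hqe1]
  -- case split on p vs Ml
  rcases lt_or_gt_of_ne hg with hlt | hgt
  · -- p < Ml : trailing negative run
    set d := Ml - p with hd
    have hd1 : 1 ≤ d := by omega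
    have hmid : ((of i₀ : FreeGroup α) ^ Ml)⁻¹ * of i₀ ^ p = (of i₀ ^ d)⁻¹ := by
      have hsp : (of i₀ : FreeGroup α) ^ Ml = of i₀ ^ p * of i₀ ^ d := by
        rw [← pow_add]
        congr 1
        omega
      rw [hsp, mul_inv_rev, mul_assoc, inv_mul_cancel, mul_one]
    have hprod : (of i₀ ^ Ml * of i₁ * (of i₀ ^ Ml)⁻¹ : FreeGroup α) ^ e * g
        = mk (replicate Ml st ++ (replicate qe (i₁, bb) ++ (replicate d sf ++ R))) := by
      rw [hconj, hgd]
      have : of i₀ ^ Ml * of i₁ ^ e * (of i₀ ^ Ml)⁻¹ * (of i₀ ^ p * mk R)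
          = of i₀ ^ Ml * (of i₁ ^ e * ((of i₀ ^ Ml)⁻¹ * of i₀ ^ p * mk R)) := by group
      rw [this, hmid, hxw, ← mk_replicate_pos i₀ Ml]
      have hnegd : ((of i₀ : FreeGroup α) ^ d)⁻¹ = mk (replicate d sf) := by
        rw [mk_replicate_neg]
      rw [hnegd]
      rw [FreeGroup.mul_mk, FreeGroup.mul_mk, FreeGroup.mul_mk]
    have hch : List.Chain' NC (replicate Ml st ++ (replicate qe (i₁, bb) ++ (replicate d sf ++ R))) := by
      refine List.isChain_append.mpr ?_
      refine ⟨chain'_replicate_nc _ _, ?_, ?_⟩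
      · rw [List.isChain_append]
        refine ⟨chain'_replicate_nc _ _, ?_, ?_⟩
        · rw [List.isChain_append]
          refine ⟨chain'_replicate_nc _ _, ?_, ?_⟩
          · rw [hgdec] at hchaing
            exact (List.isChain_append.mp hchaing).2.1
          · intro x hx y hy
            rw [getLast?_replicate_pos sf hd1] at hx
            have hx' : x = sf := by simpa using hx.symm
            subst hx'
            apply nc_right
            intro hy'
            apply hRhead y hy
            rw [hst]
            simpa using hy'
        · intro x hx y hy
          rw [getLast?_replicate_pos _ hqe1] at hx
          have hx' : x = (i₁, bb) := by simpa using hx.symm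
          subst hx'
          rw [List.head?_append, head?_replicate_pos sf hd1] at hy
          have hy' : y = sf := by simpa using hy.symm
          subst hy'
          exact nc_ne_fst (by simpa using hne)
      · intro x hx y hy
        rw [getLast?_replicate_pos st hMl] at hx
        have hx' : x = st := by simpa using hx.symm
        subst hx'
        rw [List.head?_append, head?_replicate_pos _ hqe1] at hy
        have hy' : y = (i₁, bb) := by simpa using hy.symm
        subst hy'
        exact nc_ne_fst (by simpa using hne.symm)
    rw [hprod]
    unfold runCt
    rw [toWord_mk_eq hch]
    apply leadCount_replicate_append
    intro a ha
    rw [List.head?_append, head?_replicate_pos _ hqe1] at ha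
    have : a = (i₁, bb) := by simpa using ha.symm
    subst this
    intro hcon
    apply hne
    have := congrArg Prod.fst hcon
    simpa using this
  · -- p > Ml : trailing positive run
    set d := p - Ml with hd
    have hd1 : 1 ≤ d := by omega
    have hmid : ((of i₀ : FreeGroup α) ^ Ml)⁻¹ * of i₀ ^ p = of i₀ ^ d := by
      have : (of i₀ : FreeGroup α) ^ p = of i₀ ^ Ml * of i₀ ^ d := by
        rw [← pow_add]
        congr 1
        omega
      rw [this, inv_mul_cancel_left]
    have hjR : ∀ y ∈ R.head?, NC st y := by
      rw [hgdec] at hchaing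
      have hj := (List.isChain_append.mp hchaing).2.2
      intro y hy
      apply hj st _ y hy
      exact getLast?_replicate_pos st (by omega)
    have hprod : (of i₀ ^ Ml * of i₁ * (of i₀ ^ Ml)⁻¹ : FreeGroup α) ^ e * g
        = mk (replicate Ml st ++ (replicate qe (i₁, bb) ++ (replicate d st ++ R))) := by
      rw [hconj, hgd]
      have : of i₀ ^ Ml * of i₁ ^ e * (of i₀ ^ Ml)⁻¹ * (of i₀ ^ p * mk R)
          = of i₀ ^ Ml * (of i₁ ^ e * ((of i₀ ^ Ml)⁻¹ * of i₀ ^ p * mk R)) := by group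
      rw [this, hmid, hxw, ← mk_replicate_pos i₀ Ml, ← mk_replicate_pos i₀ d]
      rw [FreeGroup.mul_mk, FreeGroup.mul_mk, FreeGroup.mul_mk]
    have hch : List.Chain' NC (replicate Ml st ++ (replicate qe (i₁, bb) ++ (replicate d st ++ R))) := by
      refine List.isChain_append.mpr ?_
      refine ⟨chain'_replicate_nc _ _, ?_, ?_⟩
      · rw [List.isChain_append]
        refine ⟨chain'_replicate_nc _ _, ?_, ?_⟩
        · rw [List.isChain_append]
          refine ⟨chain'_replicate_nc _ _, ?_, ?_⟩
          · rw [hgdec] at hchaing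
            exact (List.isChain_append.mp hchaing).2.1
          · intro x hx y hy
            rw [getLast?_replicate_pos st hd1] at hx
            have hx' : x = st := by simpa using hx.symm
            subst hx'
            exact hjR y hy
        · intro x hx y hy
          rw [getLast?_replicate_pos _ hqe1] at hx
          have hx' : x = (i₁, bb) := by simpa using hx.symm
          subst hx'
          rw [List.head?_append, head?_replicate_pos st hd1] at hy
          have hy' : y = st := by simpa using hy.symm
          subst hy'
          exact nc_ne_fst (by simpa using hne)
      · intro x hx y hy
        rw [getLast?_replicate_pos st hMl] at hx
        have hx' : x = st := by simpa using hx.symm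
        subst hx'
        rw [List.head?_append, head?_replicate_pos _ hqe1] at hy
        have hy' : y = (i₁, bb) := by simpa using hy.symm
        subst hy'
        exact nc_ne_fst (by simpa using hne.symm)
    rw [hprod]
    unfold runCt
    rw [toWord_mk_eq hch]
    apply leadCount_replicate_append
    intro a ha
    rw [List.head?_append, head?_replicate_pos _ hqe1] at ha
    have : a = (i₁, bb) := by simpa using ha.symm
    subst this
    intro hcon
    apply hne
    have := congrArg Prod.fst hcon
    simpa using this

end Main

section Profile

variable {α : Type*} [DecidableEq α] (wt : α × Bool → ℤ)
  (hwt : ∀ a (b : Bool), wt (a, !b) = - wt (a, b)) (J : ℕ)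

lemma psum_of_ge (L : List (α × Bool)) {t : ℕ} (h : L.length ≤ t) :
    psum wt L t = wsum wt L := by
  unfold psum wsum
  rw [List.take_of_length_le h]

include hwt in
lemma profile_lemma {m : ℕ} (b : Fin m → FreeGroup α)
    (htot : ∀ i, wsum wt (toWord (b i)) = 0)
    (hJ : ∀ i t, (psum wt (toWord (b i)) t).natAbs ≤ J) (x : FreeGroup (Fin m)) :
    wsum wt (toWord (FreeGroup.lift b x)) = 0 ∧
      ∀ t, (psum wt (toWord (FreeGroup.lift b x)) t).natAbs ≤ J := by
  induction x using FreeGroup.induction_on with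
  | C1 =>
    rw [_root_.map_one, FreeGroup.toWord_one]
    constructor
    · simp [wsum]
    · intro t; simp [psum]
  | of i =>
    have h1 : FreeGroup.lift b (FreeGroup.of i) = b i := FreeGroup.lift_apply_of
    rw [h1]
    exact ⟨htot i, hJ i⟩
  | inv_of i _ =>
    have h1 : FreeGroup.lift b ((FreeGroup.of i)⁻¹) = (b i)⁻¹ := by
      rw [_root_.map_inv, FreeGroup.lift_apply_of]
    rw [h1]
    rw [FreeGroup.toWord_inv]
    constructor
    · rw [wsum_invRev wt hwt, htot i]; ring
    · intro t
      set L := toWord (b i) with hL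
      have hlen : (invRev L).length = L.length := by
        unfold FreeGroup.invRev; simp
      rcases le_or_gt t L.length with ht | ht
      · rw [psum_invRev wt hwt L t ht, htot i]
        simpa using hJ i (L.length - t)
      · rw [psum_of_ge wt _ (by omega : (invRev L).length ≤ t)]
        rw [wsum_invRev wt hwt, htot i]
        simp
  | mul x y ihx ihy =>
    rw [_root_.map_mul]
    set Lx := toWord (FreeGroup.lift b x) with hLx
    set Ly := toWord (FreeGroup.lift b y) with hLy
    have hmk : FreeGroup.lift b x * FreeGroup.lift b y = FreeGroup.mk (Lx ++ Ly) := by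
      conv_lhs => rw [← FreeGroup.mk_toWord (x := FreeGroup.lift b x),
        ← FreeGroup.mk_toWord (x := FreeGroup.lift b y)]
      rw [FreeGroup.mul_mk]
    have hred : Red (Lx ++ Ly) (toWord (FreeGroup.lift b x * FreeGroup.lift b y)) := by
      rw [hmk, FreeGroup.toWord_mk]
      exact FreeGroup.reduce.red
    constructor
    · rw [wsum_red wt hwt hred, wsum_append, ihx.1, ihy.1]; ring
    · intro t
      obtain ⟨t', ht'⟩ := psum_red wt hwt hred t
      rw [ht']
      rcases le_or_gt t' Lx.length with h | h
      · rw [psum_append_le wt _ _ h]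
        exact ihx.2 t'
      · obtain ⟨s, rfl⟩ : ∃ s, t' = Lx.length + s := ⟨t' - Lx.length, by omega⟩
        rw [psum_append_ge wt, ihx.1, zero_add]
        exact ihy.2 s

end Profile

/-- index types for the free product -/
def ExtTy (m k : ℕ) : Option (Fin k) → Type
  | none => Fin m
  | some _ => Unit

open Pointwise in
theorem extension_exists {n m : ℕ} (hm : 1 ≤ m) (hmn : m < n)
    (i₀ i₁ : Fin n) (hne : i₁ ≠ i₀) (wt : Fin n × Bool → ℤ)
    (hwt : ∀ a (b : Bool), wt (a, !b) = - wt (a, b)) (hw : 1 ≤ wt (i₀, true)) (J : ℕ)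
    (b : Fin m → FreeGroup (Fin n)) (hb : Function.Injective (FreeGroup.lift b))
    (htot : ∀ i, wsum wt (toWord (b i)) = 0)
    (hJ : ∀ i t, (psum wt (toWord (b i)) t).natAbs ≤ J) :
    ∃ fext : FreeGroup (Fin n) →* FreeGroup (Fin n), Function.Injective fext ∧
      ∀ j : Fin m, fext (FreeGroup.of (Fin.castLE (le_of_lt hmn) j)) = b j := by
  classical
  set k := n - m with hk
  have hk1 : 1 ≤ k := by omega
  haveI : Nonempty (Fin k) := ⟨⟨0, hk1⟩⟩
  haveI : Nontrivial (Option (Fin k)) := ⟨⟨none, some ⟨0, hk1⟩, by simp⟩⟩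
  set c : Fin k → FreeGroup (Fin n) :=
    fun l => of i₀ ^ (J + 1 + (l : ℕ)) * of i₁ * (of i₀ ^ (J + 1 + (l : ℕ)))⁻¹ with hc
  let f : ∀ o : Option (Fin k), FreeGroup (ExtTy m k o) →* FreeGroup (Fin n) := fun o =>
    match o with
    | none => FreeGroup.lift b
    | some l => FreeGroup.lift (fun _ => c l)
  let X : Option (Fin k) → Set (FreeGroup (Fin n)) := fun o =>
    match o with
    | none => {g | runCt i₀ g ≤ J}
    | some l => {g | runCt i₀ g = J + 1 + (l : ℕ)}
  haveI : Infinite (FreeGroup (Fin m)) := by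
    refine Infinite.of_injective (fun t : ℕ => FreeGroup.of (⟨0, hm⟩ : Fin m) ^ t) ?_
    intro s t hst
    have := congrArg FreeGroup.norm hst
    simpa [FreeGroup.norm_of_pow] using this
  have hcard : (3 : Cardinal) ≤ Cardinal.mk (Option (Fin k)) ∨
      ∃ o, (3 : Cardinal) ≤ Cardinal.mk (FreeGroup (ExtTy m k o)) := by
    right
    refine ⟨none, ?_⟩
    calc (3 : Cardinal) ≤ Cardinal.aleph0 := (Cardinal.nat_lt_aleph0 3).le
      _ ≤ Cardinal.mk (FreeGroup (Fin m)) := Cardinal.aleph0_le_mk _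
  have hXne : ∀ o, (X o).Nonempty := by
    rintro (_ | l)
    · exact ⟨1, by simp [X, runCt_one]⟩
    · exact ⟨of i₀ ^ (J + 1 + (l : ℕ)), by simp [X, runCt_pow]⟩
  have hXdisj : Pairwise (Function.onFun _root_.Disjoint X) := by
    rintro (_ | l) (_ | l') hij
    · exact absurd rfl hij
    · refine Set.disjoint_left.mpr ?_
      rintro g hg hg'
      simp only [X, Set.mem_setOf_eq] at hg hg'
      omega
    · refine Set.disjoint_left.mpr ?_
      rintro g hg hg'
      simp only [X, Set.mem_setOf_eq] at hg hg'
      omega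
    · have hll' : l ≠ l' := fun hcon => hij (by rw [hcon])
      have hvv : (l : ℕ) ≠ (l' : ℕ) := fun hcon => hll' (Fin.ext hcon)
      refine Set.disjoint_left.mpr ?_
      rintro g hg hg'
      simp only [X, Set.mem_setOf_eq] at hg hg'
      omega
  have hpp : Pairwise fun o o' => ∀ x : FreeGroup (ExtTy m k o), x ≠ 1 → f o x • X o' ⊆ X o := by
    rintro (_ | l) (_ | l') hij
    · exact absurd rfl hij
    · -- H acting on X (some l')
      intro x hx g' hg'
      rw [Set.mem_smul_set] at hg'
      obtain ⟨g, hg, rfl⟩ := hg'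
      simp only [X, Set.mem_setOf_eq] at hg ⊢
      rw [smul_eq_mul]
      have hprof := profile_lemma wt hwt J b htot hJ x
      refine run_H_mul i₀ wt hwt J hw g ?_ hprof.1 hprof.2 (by omega)
      intro hcon
      apply hx
      apply hb
      exact hcon.trans (_root_.map_one (FreeGroup.lift b)).symm
    · -- c l acting on X none
      intro y hy g' hg'
      rw [Set.mem_smul_set] at hg'
      obtain ⟨g, hg, rfl⟩ := hg'
      simp only [X, Set.mem_setOf_eq] at hg ⊢
      rw [smul_eq_mul]
      have hsymm : FreeGroup.of () ^ (freeGroupUnitEquivInt y) = y :=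
        Equiv.symm_apply_apply freeGroupUnitEquivInt y
      set e := freeGroupUnitEquivInt y with he
      have he0 : e ≠ 0 := by
        intro he'
        apply hy
        rw [← hsymm, he']
        simp
        rfl
      have hfy : f (some l) y = c l ^ e := by
        show FreeGroup.lift (fun _ => c l) y = c l ^ e
        erw [← hsymm, map_zpow, FreeGroup.lift_apply_of]
      rw [hfy]
      exact run_c_mul i₀ i₁ hne (J + 1 + (l : ℕ)) (by omega) e he0 g (by omega)
    · -- c l acting on X (some l')
      intro y hy g' hg'
      rw [Set.mem_smul_set] at hg'
      obtain ⟨g, hg, rfl⟩ := hg'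
      simp only [X, Set.mem_setOf_eq] at hg ⊢
      rw [smul_eq_mul]
      have hsymm : FreeGroup.of () ^ (freeGroupUnitEquivInt y) = y :=
        Equiv.symm_apply_apply freeGroupUnitEquivInt y
      set e := freeGroupUnitEquivInt y with he
      have he0 : e ≠ 0 := by
        intro he'
        apply hy
        rw [← hsymm, he']
        simp
        rfl
      have hfy : f (some l) y = c l ^ e := by
        show FreeGroup.lift (fun _ => c l) y = c l ^ e
        erw [← hsymm, map_zpow, FreeGroup.lift_apply_of]
      rw [hfy]
      have hll' : l ≠ l' := fun hcon => hij (by rw [hcon])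
      have hvv : (l : ℕ) ≠ (l' : ℕ) := fun hcon => hll' (Fin.ext hcon)
      exact run_c_mul i₀ i₁ hne (J + 1 + (l : ℕ)) (by omega) e he0 g (by omega)
  have hinj : Function.Injective (Monoid.CoprodI.lift f) :=
    Monoid.CoprodI.lift_injective_of_ping_pong f hcard X hXne hXdisj hpp
  -- the embedding of FreeGroup (Fin n) into the free product
  set τ : Fin n → Monoid.CoprodI (fun o : Option (Fin k) => FreeGroup (ExtTy m k o)) := fun i =>
    if h : (i : ℕ) < m then Monoid.CoprodI.of (i := none) (FreeGroup.of (⟨i, h⟩ : Fin m))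
    else Monoid.CoprodI.of (i := some ⟨(i : ℕ) - m, by omega⟩) (FreeGroup.of ()) with hτ
  set σ : ∀ o : Option (Fin k), FreeGroup (ExtTy m k o) →* FreeGroup (Fin n) := fun o =>
    match o with
    | none => FreeGroup.map (Fin.castLE (le_of_lt hmn))
    | some l => FreeGroup.lift (fun _ => FreeGroup.of (⟨m + (l : ℕ), by omega⟩ : Fin n)) with hσ
  have hST : (Monoid.CoprodI.lift σ).comp (FreeGroup.lift τ) = MonoidHom.id _ := by
    apply FreeGroup.ext_hom
    intro i
    show Monoid.CoprodI.lift σ (FreeGroup.lift τ (FreeGroup.of i)) = FreeGroup.of i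
    rw [FreeGroup.lift_apply_of]
    by_cases h : (i : ℕ) < m
    · rw [show τ i = Monoid.CoprodI.of (i := none) (FreeGroup.of (⟨i, h⟩ : Fin m)) from dif_pos h]
      erw [Monoid.CoprodI.lift_of]
      show FreeGroup.map (Fin.castLE (le_of_lt hmn)) (FreeGroup.of _) = _
      rw [FreeGroup.map.of]
      apply congrArg
      apply Fin.ext
      simp
    · rw [show τ i = Monoid.CoprodI.of (i := some ⟨(i : ℕ) - m, by omega⟩) (FreeGroup.of ())
        from dif_neg h]
      erw [Monoid.CoprodI.lift_of]
      show FreeGroup.lift _ (FreeGroup.of ()) = _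
      erw [FreeGroup.lift_apply_of]
      apply congrArg
      apply Fin.ext
      show m + ((i : ℕ) - m) = (i : ℕ)
      omega
  have hTinj : Function.Injective (FreeGroup.lift τ) := by
    have hli : Function.LeftInverse (Monoid.CoprodI.lift σ) (FreeGroup.lift τ) := fun x => by
      rw [← MonoidHom.comp_apply, hST]; rfl
    exact hli.injective
  refine ⟨(Monoid.CoprodI.lift f).comp (FreeGroup.lift τ), hinj.comp hTinj, ?_⟩
  intro j
  have hcast : ((Fin.castLE (le_of_lt hmn) j : Fin n) : ℕ) < m := by
    simpa using j.isLt
  show Monoid.CoprodI.lift f (FreeGroup.lift τ (FreeGroup.of (Fin.castLE (le_of_lt hmn) j))) = b j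
  rw [FreeGroup.lift_apply_of]
  rw [show τ (Fin.castLE (le_of_lt hmn) j)
      = Monoid.CoprodI.of (i := none)
          (FreeGroup.of (⟨Fin.castLE (le_of_lt hmn) j, hcast⟩ : Fin m))
      from dif_pos hcast]
  erw [Monoid.CoprodI.lift_of]
  show FreeGroup.lift b (FreeGroup.of _) = b j
  rw [FreeGroup.lift_apply_of]
  apply congrArg
  apply Fin.ext
  simp

section LinAlg

lemma natAbs_sum_le {γ : Type*} (wt : γ → ℤ) (Φ : ℕ) (hΦ : ∀ p, (wt p).natAbs ≤ Φ)
    (M : List γ) : ((M.map wt).sum).natAbs ≤ M.length * Φ := by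
  induction M with
  | nil => simp
  | cons a M ih =>
    simp only [List.map_cons, List.sum_cons, List.length_cons]
    calc ((wt a + (M.map wt).sum)).natAbs ≤ (wt a).natAbs + ((M.map wt).sum).natAbs :=
          Int.natAbs_add_le _ _
      _ ≤ Φ + M.length * Φ := Nat.add_le_add (hΦ a) ih
      _ = (M.length + 1) * Φ := by ring

lemma wsum_eq_sum_V {n : ℕ} (φ : Fin n → ℤ) (L : List (Fin n × Bool)) :
    (∑ j, ((L.map fun p => if p.1 = j then (if p.2 then (1:ℤ) else -1) else 0).sum) * φ j)
      = wsum (fun p => if p.2 then φ p.1 else -φ p.1) L := by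
  induction L with
  | nil => simp [wsum]
  | cons p L ih =>
    have hws : wsum (fun p => if p.2 then φ p.1 else -φ p.1) (p :: L)
        = (if p.2 then φ p.1 else -φ p.1) + wsum (fun p => if p.2 then φ p.1 else -φ p.1) L := by
      unfold wsum
      simp
    rw [hws, ← ih]
    have hsplit : ∀ j : Fin n,
        (List.map (fun p => if p.1 = j then if p.2 = true then (1:ℤ) else -1 else 0) (p :: L)).sum * φ j
        = (if p.1 = j then if p.2 = true then (1:ℤ) else -1 else 0) * φ j
          + (List.map (fun p => if p.1 = j then if p.2 = true then (1:ℤ) else -1 else 0) L).sum * φ j := by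
      intro j
      simp [add_mul]
    rw [Finset.sum_congr rfl (fun j _ => hsplit j), Finset.sum_add_distrib]
    congr 1
    have hswap : ∀ j : Fin n, (if p.1 = j then if p.2 = true then (1:ℤ) else -1 else 0) * φ j
        = if p.1 = j then (if p.2 = true then (1:ℤ) else -1) * φ j else 0 := by
      intro j
      by_cases hj : p.1 = j <;> simp [hj]
    rw [Finset.sum_congr rfl (fun j _ => hswap j), Finset.sum_ite_eq]
    by_cases hb : p.2 <;> simp [hb]

lemma exists_weights {n m : ℕ} (hmn : m < n) (b : Fin m → FreeGroup (Fin n)) :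
    ∃ (i₀ : Fin n) (φ : Fin n → ℤ), 1 ≤ φ i₀ ∧
      ∀ i, wsum (fun p => if p.2 then φ p.1 else -φ p.1) (toWord (b i)) = 0 := by
  classical
  set V : Fin m → Fin n → ℤ :=
    fun i j => ((toWord (b i)).map fun p => if p.1 = j then (if p.2 then (1:ℤ) else -1) else 0).sum
    with hV
  set Mx : Matrix (Fin m) (Fin n) ℤ := Matrix.of V with hMx
  have hker : LinearMap.ker Mx.mulVecLin ≠ ⊥ := by
    intro h0
    have hinj := LinearMap.ker_eq_bot.mp h0
    have hle := LinearMap.rank_le_of_injective _ hinj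
    rw [rank_fin_fun, rank_fin_fun] at hle
    have : n ≤ m := by exact_mod_cast hle
    omega
  obtain ⟨φ0, hmem, hφ0⟩ := (Submodule.ne_bot_iff _).mp hker
  have hv : ∀ i, (∑ j, V i j * φ0 j) = 0 := by
    intro i
    have h1 := LinearMap.mem_ker.mp hmem
    have h2 := congrFun h1 i
    simpa [Matrix.mulVecLin_apply, Matrix.mulVec, dotProduct, hMx] using h2
  obtain ⟨i₀, hi₀⟩ : ∃ j, φ0 j ≠ 0 := by
    by_contra hcon
    push_neg at hcon
    exact hφ0 (funext hcon)
  rcases lt_or_gt_of_ne hi₀ with hneg | hpos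
  · refine ⟨i₀, -φ0, by simp only [Pi.neg_apply]; omega, ?_⟩
    intro i
    rw [← wsum_eq_sum_V]
    have : (∑ j, V i j * (-φ0) j) = -(∑ j, V i j * φ0 j) := by
      rw [← Finset.sum_neg_distrib]
      apply Finset.sum_congr rfl
      intro j _
      simp [mul_neg]
    rw [this, hv i, neg_zero]
  · refine ⟨i₀, φ0, by omega, ?_⟩
    intro i
    rw [← wsum_eq_sum_V]
    exact hv i

end LinAlg

end CiobanuPP

/-- Converse direction (2) ⇒ (1) of Proposition 3.2 of Ciobanu–Ould Houcine. -/
theorem monomorphism_criterion_converse (n : ℕ) (hn : 2 ≤ n)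
    (u v : FreeGroup (Fin n))
    (m : ℕ) (hm1 : 1 ≤ m) (hmn : m ≤ n)
    (b : Fin m → FreeGroup (Fin n))
    (hb : Function.Injective (FreeGroup.lift b))
    (w : FreeGroup (Fin m))
    (hw : FreeGroup.lift b w = v)
    (h : FreeGroup (Fin n) ≃* FreeGroup (Fin n))
    (hh : h u = FreeGroup.map (Fin.castLE hmn) w) :
    ∃ f : FreeGroup (Fin n) →* FreeGroup (Fin n),
      Function.Injective f ∧ f u = v := by
  classical
  open CiobanuPP in
  by_cases hcase : m = n
  · subst hcase
    have hcast : FreeGroup.map (Fin.castLE hmn) w = w := by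
      have hid : (FreeGroup.map (Fin.castLE hmn) : FreeGroup (Fin m) →* FreeGroup (Fin m))
          = MonoidHom.id _ := by
        apply FreeGroup.ext_hom
        intro a
        rw [FreeGroup.map.of]
        simp
      rw [hid]
      rfl
    refine ⟨(FreeGroup.lift b).comp h.toMonoidHom, ?_, ?_⟩
    · exact hb.comp h.injective
    · show FreeGroup.lift b (h u) = v
      rw [hh, hcast, hw]
  · have hmlt : m < n := lt_of_le_of_ne hmn hcase
    obtain ⟨i₀, φ, hφpos, htot⟩ := CiobanuPP.exists_weights hmlt b
    set wt : Fin n × Bool → ℤ := fun p => if p.2 then φ p.1 else -φ p.1 with hwtdef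
    have hwt : ∀ a (c : Bool), wt (a, !c) = - wt (a, c) := by
      intro a c
      cases c <;> simp [hwtdef]
    have hwpos : 1 ≤ wt (i₀, true) := by simpa [hwtdef] using hφpos
    -- second letter
    have h0n : 0 < n := by omega
    have h1n : 1 < n := by omega
    set i₁ : Fin n := if (i₀ : ℕ) = 0 then ⟨1, h1n⟩ else ⟨0, h0n⟩ with hi₁
    have hne : i₁ ≠ i₀ := by
      rcases eq_or_ne (i₀ : ℕ) 0 with h0 | h0
      · rw [hi₁, if_pos h0]
        intro hcon
        have := congrArg Fin.val hcon
        simp [h0] at this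
      · rw [hi₁, if_neg h0]
        intro hcon
        have := congrArg Fin.val hcon
        simp at this
        omega
    set Φ : ℕ := Finset.univ.sup (fun j => (φ j).natAbs) with hΦ
    set J : ℕ := Finset.univ.sup (fun i : Fin m => (FreeGroup.toWord (b i)).length * Φ) with hJdef
    have hJ : ∀ i t, (CiobanuPP.psum wt (FreeGroup.toWord (b i)) t).natAbs ≤ J := by
      intro i t
      have h1 : (CiobanuPP.psum wt (FreeGroup.toWord (b i)) t).natAbs
          ≤ ((FreeGroup.toWord (b i)).take t).length * Φ := by
        apply CiobanuPP.natAbs_sum_le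
        intro p
        rcases p with ⟨a, c⟩
        have : (wt (a, c)).natAbs = (φ a).natAbs := by
          cases c <;> simp [hwtdef]
        rw [this, hΦ]
        exact Finset.le_sup (f := fun j : Fin n => (φ j).natAbs) (Finset.mem_univ a)
      calc (CiobanuPP.psum wt (FreeGroup.toWord (b i)) t).natAbs
          ≤ ((FreeGroup.toWord (b i)).take t).length * Φ := h1
        _ ≤ (FreeGroup.toWord (b i)).length * Φ := by
            apply Nat.mul_le_mul_right
            simpa [List.length_take] using Nat.min_le_right t _
        _ ≤ J := by
            rw [hJdef]
            exact Finset.le_sup (f := fun i : Fin m => (FreeGroup.toWord (b i)).length * Φ)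
              (Finset.mem_univ i)
    obtain ⟨fext, hfinj, hfval⟩ := CiobanuPP.extension_exists hm1 hmlt i₀ i₁ hne wt hwt hwpos J
      b hb htot hJ
    refine ⟨fext.comp h.toMonoidHom, hfinj.comp h.injective, ?_⟩
    show fext (h u) = v
    rw [hh]
    have hcomm : ∀ x : FreeGroup (Fin m), fext (FreeGroup.map (Fin.castLE hmn) x)
        = FreeGroup.lift b x := by
      intro x
      have hhom : fext.comp (FreeGroup.map (Fin.castLE hmn) : FreeGroup (Fin m) →* FreeGroup (Fin n))
          = FreeGroup.lift b := by
        apply FreeGroup.ext_hom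
        intro a
        rw [MonoidHom.comp_apply, FreeGroup.map.of]
        rw [FreeGroup.lift_apply_of]
        have := hfval a
        convert this using 3
      exact DFunLike.congr_fun hhom x
    rw [hcomm w, hw]
end

section
/- Let n ≥ 2, let F = FreeGroup (Fin n), and let H be a subgroup of F generated by m < n elements, i.e., H = Subgroup.closure (Set.range a) for some a : Fin m → F with m < n. Then H is contained in a subgroup of F of infinite rank: there exists a subgroup K of F with H ≤ K and K not finitely generated. -/
open Multiplicative SemidirectProduct

lemma exists_ortho (m n : ℕ) (hm : m < n) (A : Fin m → Fin n → ℤ) :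
    ∃ c : Fin n → ℤ, c ≠ 0 ∧ ∀ i, ∑ j, A i j * c j = 0 := by
  by_contra hcon
  push_neg at hcon
  set g : (Fin n → ℤ) →ₗ[ℤ] (Fin m → ℤ) := (Matrix.of A).mulVecLin with hg
  have hinj : Function.Injective g := by
    rw [← LinearMap.ker_eq_bot, Submodule.eq_bot_iff]
    intro c hc
    by_contra hc0
    obtain ⟨i, hi⟩ := hcon c hc0
    apply hi
    have : g c i = 0 := by rw [hc]; rfl
    simpa [hg, Matrix.mulVecLin_apply, Matrix.mulVec, dotProduct] using this
  have := LinearMap.finrank_le_finrank_of_injective hinj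
  simp [Module.finrank_pi] at this
  omega

noncomputable def shiftMul (k : ℤ) : MulAut (Multiplicative (ℤ →₀ ℤ)) :=
  AddEquiv.toMultiplicative (Finsupp.domCongr (Equiv.addRight k))

lemma shiftMul_apply (k : ℤ) (v : ℤ →₀ ℤ) :
    shiftMul k (Multiplicative.ofAdd v) =
      Multiplicative.ofAdd (Finsupp.equivMapDomain (Equiv.addRight k) v) := rfl

noncomputable def rho : Multiplicative ℤ →* MulAut (Multiplicative (ℤ →₀ ℤ)) :=
  MonoidHom.mk' (fun k => shiftMul k.toAdd) (by
    intro k l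
    ext v : 1
    show Finsupp.equivMapDomain (Equiv.addRight (k.toAdd + l.toAdd)) v.toAdd
        = Finsupp.equivMapDomain (Equiv.addRight k.toAdd)
            (Finsupp.equivMapDomain (Equiv.addRight l.toAdd) v.toAdd)
    rw [← Finsupp.equivMapDomain_trans]
    congr 1
    ext x
    simp only [Equiv.trans_apply, Equiv.coe_addRight]; omega)

lemma rho_apply_single (k : ℤ) (a b : ℤ) :
    rho (Multiplicative.ofAdd k) (Multiplicative.ofAdd (Finsupp.single a b)) =
      Multiplicative.ofAdd (Finsupp.single (a + k) b) := by
  show shiftMul k _ = _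
  rw [shiftMul_apply, Finsupp.equivMapDomain_single]
  rfl

lemma conj_comm_left {N G : Type*} [Group N] [CommGroup G] {φ : G →* MulAut N}
    (g h : G) (X : N) :
    ((SemidirectProduct.inr g : N ⋊[φ] G) * SemidirectProduct.mk X h * (SemidirectProduct.inr g)⁻¹ *
      (SemidirectProduct.mk X h : N ⋊[φ] G)⁻¹).left = φ g X * X⁻¹ := by
  simp only [SemidirectProduct.mul_left, SemidirectProduct.mul_right,
    SemidirectProduct.inv_left, SemidirectProduct.inv_right,
    SemidirectProduct.left_inr, SemidirectProduct.right_inr, one_mul, mul_one, map_one,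
    MulAut.one_apply]
  have : φ (g * h * g⁻¹) (φ h⁻¹ X⁻¹) = X⁻¹ := by
    rw [← MulAut.mul_apply, ← map_mul]
    have : g * h * g⁻¹ * h⁻¹ = 1 := by
      rw [mul_comm g h]; group
    rw [this, map_one, MulAut.one_apply]
  rw [this]
  simp

set_option maxHeartbeats 1000000 in
/-- Claim proved in Lemma 2.4 of Ciobanu–Ould Houcine: a subgroup of the free
group of rank `n ≥ 2` generated by `m < n` elements is contained in a subgroup
of infinite rank (i.e. one that is not finitely generated). -/
theorem subgroup_contained_in_infinite_rank (n : ℕ) (hn : 2 ≤ n)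
    (m : ℕ) (hm : m < n)
    (a : Fin m → FreeGroup (Fin n))
    (H : Subgroup (FreeGroup (Fin n)))
    (hH : H = Subgroup.closure (Set.range a)) :
    ∃ K : Subgroup (FreeGroup (Fin n)), H ≤ K ∧ ¬ K.FG := by
  classical
  -- abelianization data
  set E : FreeGroup (Fin n) →* Multiplicative (Fin n → ℤ) :=
    FreeGroup.lift (fun j : Fin n => Multiplicative.ofAdd (Pi.single j 1 : Fin n → ℤ)) with hE
  obtain ⟨c, hc0, hcA⟩ := exists_ortho m n hm (fun i => Multiplicative.toAdd (E (a i)))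
  -- the dot-product homomorphism and φ
  set dot : (Fin n → ℤ) →+ ℤ :=
    { toFun := fun v => ∑ j, v j * c j
      map_zero' := by simp
      map_add' := by intro v w; simp [add_mul, Finset.sum_add_distrib] } with hdot
  set φ : FreeGroup (Fin n) →* Multiplicative ℤ :=
    (AddMonoidHom.toMultiplicative dot).comp E with hφ
  have hφof : ∀ i : Fin n, φ (FreeGroup.of i) = Multiplicative.ofAdd (c i) := by
    intro i
    simp only [hφ, MonoidHom.comp_apply, hE, FreeGroup.lift_apply_of]
    show Multiplicative.ofAdd (dot (Pi.single i 1)) = _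
    simp [hdot, Pi.single_apply]
  have hφa : ∀ i, φ (a i) = 1 := by
    intro i
    simp only [hφ, MonoidHom.comp_apply]
    show Multiplicative.ofAdd (dot (Multiplicative.toAdd (E (a i)))) = 1
    rw [show dot (Multiplicative.toAdd (E (a i))) = 0 from hcA i]
    rfl
  set K : Subgroup (FreeGroup (Fin n)) := φ.ker with hK
  refine ⟨K, ?_, ?_⟩
  · rw [hH]
    rw [Subgroup.closure_le]
    rintro _ ⟨i, rfl⟩
    exact hφa i
  -- now K is not finitely generated
  intro hFG
  obtain ⟨i0, hi0⟩ : ∃ i0, c i0 ≠ 0 := by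
    by_contra h; push_neg at h; exact hc0 (funext h)
  have h1n : (1 : ℕ) < n := lt_of_lt_of_le one_lt_two hn
  set j : Fin n := if i0 = ⟨0, by omega⟩ then ⟨1, h1n⟩ else ⟨0, by omega⟩ with hj
  have hji0 : i0 ≠ j := by
    rcases eq_or_ne i0 ⟨0, by omega⟩ with h | h
    · rw [hj, if_pos h, h]
      intro hc; exact absurd (Fin.val_eq_of_eq hc) (by simp)
    · rw [hj, if_neg h]; exact h
  -- the homomorphism into the wreath-type group
  set θ : FreeGroup (Fin n) →* (Multiplicative (ℤ →₀ ℤ)) ⋊[rho] Multiplicative ℤ :=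
    FreeGroup.lift (fun i : Fin n =>
      SemidirectProduct.mk
        (if i = j then Multiplicative.ofAdd (Finsupp.single (0 : ℤ) (1 : ℤ)) else 1)
        (Multiplicative.ofAdd (c i))) with hθ
  have hrθ : SemidirectProduct.rightHom.comp θ = φ := by
    apply FreeGroup.ext_hom
    intro i
    simp only [MonoidHom.comp_apply, hθ, FreeGroup.lift_apply_of, hφof]
    rfl
  have hright : ∀ w, (θ w).right = φ w := by
    intro w
    rw [← hrθ]
    rfl
  -- finite generating set for the image
  obtain ⟨S, hScl, hSfin⟩ := (Subgroup.fg_iff K).1 hFG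
  have hmap : K.map θ = Subgroup.closure (θ '' S) := by
    rw [← hScl, MonoidHom.map_closure]
  set SS : Set ℤ := ⋃ s ∈ S, {x | Multiplicative.toAdd ((θ s).left) x ≠ 0} with hSS
  have hSSfin : SS.Finite := by
    refine Set.Finite.biUnion hSfin fun s _ => ?_
    have : {x | Multiplicative.toAdd ((θ s).left) x ≠ 0}
        = ↑(Multiplicative.toAdd ((θ s).left)).support := by
      ext x; simp [Finsupp.mem_support_iff]
    rw [this]
    exact (Multiplicative.toAdd ((θ s).left)).support.finite_toSet
  -- the bounding subgroup B
  set B : Subgroup ((Multiplicative (ℤ →₀ ℤ)) ⋊[rho] Multiplicative ℤ) :=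
    { carrier := {g : (Multiplicative (ℤ →₀ ℤ)) ⋊[rho] Multiplicative ℤ | g.right = 1 ∧ ∀ x, Multiplicative.toAdd g.left x ≠ 0 → x ∈ SS}
      one_mem' := by
        constructor
        · rfl
        · intro x hx; exact absurd rfl hx
      mul_mem' := by
        rintro g h ⟨hg1, hg2⟩ ⟨hh1, hh2⟩
        constructor
        · rw [SemidirectProduct.mul_right, hg1, hh1, mul_one]
        · intro x hx
          rw [SemidirectProduct.mul_left, hg1, map_one] at hx
          simp only [MulAut.one_apply, toAdd_mul, Finsupp.add_apply] at hx
          by_cases h2 : Multiplicative.toAdd g.left x ≠ 0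
          · exact hg2 x h2
          · push_neg at h2
            rw [h2, zero_add] at hx
            exact hh2 x hx
      inv_mem' := by
        rintro g ⟨hg1, hg2⟩
        constructor
        · rw [SemidirectProduct.inv_right, hg1, inv_one]
        · intro x hx
          rw [SemidirectProduct.inv_left, hg1, inv_one, map_one] at hx
          simp only [MulAut.one_apply, toAdd_inv, Finsupp.neg_apply, neg_ne_zero] at hx
          exact hg2 x hx } with hB
  have hclB : Subgroup.closure (θ '' S) ≤ B := by
    rw [Subgroup.closure_le]
    rintro _ ⟨s, hs, rfl⟩
    have hsK : s ∈ K := by rw [← hScl]; exact Subgroup.subset_closure hs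
    constructor
    · rw [hright s]; exact hsK
    · intro x hx
      exact Set.mem_biUnion hs hx
  -- choose k with k * c i0 fresh
  have hmulinj : Function.Injective (fun k : ℤ => k * c i0) := fun x y hxy => by
    exact mul_right_cancel₀ hi0 hxy
  have hF0 : Set.Finite ((fun k : ℤ => k * c i0) ⁻¹' (SS ∪ {0})) :=
    Set.Finite.preimage hmulinj.injOn (hSSfin.union (Set.finite_singleton 0))
  obtain ⟨k, hk⟩ := hF0.infinite_compl.nonempty
  rw [Set.mem_compl_iff, Set.mem_preimage, Set.mem_union] at hk
  push_neg at hk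
  obtain ⟨hkSS, hk0⟩ := hk
  rw [Set.mem_singleton_iff] at hk0
  -- the witness element
  set w : FreeGroup (Fin n) :=
    (FreeGroup.of i0) ^ k * FreeGroup.of j * (FreeGroup.of i0) ^ (-k) * (FreeGroup.of j)⁻¹
    with hw
  have hwK : w ∈ K := by
    show φ w = 1
    rw [hw]
    simp only [map_mul, map_zpow, map_inv, hφof]
    rw [mul_comm ((Multiplicative.ofAdd (c i0)) ^ k) (Multiplicative.ofAdd (c j))]
    group
  have hwB : θ w ∈ B := hclB (hmap ▸ Subgroup.mem_map_of_mem θ hwK)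
  -- compute the left part of θ w
  have hθi0 : θ (FreeGroup.of i0) = SemidirectProduct.inr (Multiplicative.ofAdd (c i0)) := by
    rw [hθ, FreeGroup.lift_apply_of, if_neg hji0]
    ext <;> simp
  have hθj : θ (FreeGroup.of j) =
      SemidirectProduct.mk (Multiplicative.ofAdd (Finsupp.single (0 : ℤ) (1 : ℤ)))
        (Multiplicative.ofAdd (c j)) := by
    rw [hθ, FreeGroup.lift_apply_of, if_pos rfl]
  have hpow : (Multiplicative.ofAdd (c i0)) ^ k = Multiplicative.ofAdd (k * c i0) := by
    rw [← ofAdd_zsmul, smul_eq_mul]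
  have hleft : (θ w).left =
      rho (Multiplicative.ofAdd (k * c i0))
        (Multiplicative.ofAdd (Finsupp.single (0 : ℤ) (1 : ℤ))) *
      (Multiplicative.ofAdd (Finsupp.single (0 : ℤ) (1 : ℤ)))⁻¹ := by
    rw [hw, map_mul, map_mul, map_mul, map_zpow, map_zpow, map_inv, hθi0, hθj]
    have h1 : (SemidirectProduct.inr (Multiplicative.ofAdd (c i0)) :
        (Multiplicative (ℤ →₀ ℤ)) ⋊[rho] Multiplicative ℤ) ^ k
        = SemidirectProduct.inr (Multiplicative.ofAdd (k * c i0)) := by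
      rw [← map_zpow, hpow]
    have h2 : (SemidirectProduct.inr (Multiplicative.ofAdd (c i0)) :
        (Multiplicative (ℤ →₀ ℤ)) ⋊[rho] Multiplicative ℤ) ^ (-k)
        = (SemidirectProduct.inr (Multiplicative.ofAdd (k * c i0)) :
            (Multiplicative (ℤ →₀ ℤ)) ⋊[rho] Multiplicative ℤ)⁻¹ := by
      rw [zpow_neg, h1]
    rw [h1, h2]
    exact conj_comm_left _ _ _
  -- evaluate at k * c i0
  have hx : Multiplicative.toAdd ((θ w).left) (k * c i0) ≠ 0 := by
    rw [hleft]
    have : k * c i0 ≠ 0 := hk0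
    rw [rho_apply_single, zero_add]
    have h0 : ¬ ((0:ℤ) = k * c i0) := fun h => this h.symm
    simp only [toAdd_mul, toAdd_inv, toAdd_ofAdd, Finsupp.add_apply, Finsupp.neg_apply,
      Finsupp.single_apply, h0, if_false, if_pos rfl]
    simp
  exact hkSS (hwB.2 _ hx)
end

section
/- Let V be a nonempty finite type with a distinguished element ⋆ : V, let d : V → ℕ satisfy d v ≥ 3 for every v ≠ ⋆ and d ⋆ ≥ 1, and let E, g : ℕ satisfy the handshake identity ∑_{v : V} d v = 2 * E and the Euler characteristic identity E + 1 = g + Fintype.card V. Then Fintype.card V ≤ 2 * g and E + 1 ≤ 3 * g (i.e., E ≤ 3g − 1). -/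
/-- The counting core of Lemma 2.2 of Ciobanu–Ould Houcine: if a finite graph
with vertex set `V`, distinguished vertex `⋆`, degree function `d` (with
`d v ≥ 3` off `⋆` and `d ⋆ ≥ 1`), `E` edges and rank `g` satisfies the
handshake identity `∑ d v = 2E` and the Euler characteristic identity
`E - |V| + 1 = g`, then `|V| ≤ 2g` and `E ≤ 3g - 1`. -/
theorem topological_graph_count (V : Type*) [Fintype V] [Nonempty V]
    (star : V) (d : V → ℕ)
    (hd3 : ∀ v : V, v ≠ star → 3 ≤ d v) (hdstar : 1 ≤ d star)
    (E g : ℕ)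
    (handshake : ∑ v : V, d v = 2 * E)
    (euler : E + 1 = g + Fintype.card V) :
    Fintype.card V ≤ 2 * g ∧ E + 1 ≤ 3 * g := by
  classical
  have hsplit : ∑ v : V, d v = d star + ∑ v ∈ Finset.univ.erase star, d v := by
    rw [Finset.add_sum_erase _ d (Finset.mem_univ star)]
  have hsum3 : ∑ v ∈ Finset.univ.erase star, (3 : ℕ) ≤
      ∑ v ∈ Finset.univ.erase star, d v :=
    Finset.sum_le_sum fun v hv => hd3 v (Finset.ne_of_mem_erase hv)
  have hcard : (Finset.univ.erase star).card = Fintype.card V - 1 := by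
    rw [Finset.card_erase_of_mem (Finset.mem_univ star), Finset.card_univ]
  have hpos : 1 ≤ Fintype.card V := Fintype.card_pos
  have key : 1 + 3 * (Fintype.card V - 1) ≤ 2 * E := by
    rw [← handshake, hsplit]
    have : 3 * (Fintype.card V - 1) ≤ ∑ v ∈ Finset.univ.erase star, d v := by
      calc 3 * (Fintype.card V - 1) = ∑ v ∈ Finset.univ.erase star, (3 : ℕ) := by
            rw [Finset.sum_const, hcard]; ring
        _ ≤ _ := hsum3
    omega
  have : 1 + 3 * (Fintype.card V - 1) = 3 * Fintype.card V - 2 := by omega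
  have hV : Fintype.card V ≤ 2 * g := by omega
  exact ⟨hV, by omega⟩
end
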